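/- For all i, n ≥ 1, the Lah operators satisfy Σ_{k=1}^{n} (−1)^{n−k} L(k,i) ∘ L(n,k) = δ_{ni} · Id as operators from symmetric functions on X^n to symmetric functions on X^i. -/

import Mathlib

open Finset

section Defs

variable {X : Type*} [Fintype X] [DecidableEq X]

/-- The falling factorial measure `(ω)_n` on `X^n`, given by the density
`(ω)_n(y₁,…,y_n) = ω(y₁)(ω(y₂)−δ_{y₁}(y₂))⋯(ω(y_n)−δ_{y₁}(y_n)−⋯−δ_{y_{n−1}}(y_n))`. -/
noncomputable def ff (ω : X → ℝ) : (n : ℕ) → (Fin n → X) → ℝ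
  | 0 => fun _ => 1
  | n + 1 => fun y =>
      ff ω n (fun i => y i.castSucc) *
        (ω (y (Fin.last n)) - ∑ i : Fin n, if y i.castSucc = y (Fin.last n) then (1 : ℝ) else 0)

/-- Dirac measure at `x`. -/
noncomputable def diracMeas (x : X) : X → ℝ := fun a => if a = x then 1 else 0

/-- The measure `δ_{x₁}+⋯+δ_{x_k}` of a multiset `[x₁,…,x_k]`. -/
noncomputable def msMeas {k : ℕ} (x : Fin k → X) : X → ℝ :=
  fun a => ((Finset.univ.filter (fun i => x i = a)).card : ℝ)

/-- Integration `⟨μ, f⟩` of a function against a measure on `X^n`. -/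
noncomputable def pairing (n : ℕ) (μ f : (Fin n → X) → ℝ) : ℝ :=
  ∑ y : Fin n → X, μ y * f y

/-- Symmetrization of a function/measure on `X^n`. -/
noncomputable def symmFun (n : ℕ) (μ : (Fin n → X) → ℝ) : (Fin n → X) → ℝ :=
  fun y => (∑ π : Equiv.Perm (Fin n), μ (y ∘ π)) / n.factorial

/-- Tensor product of measures/functions on `X^k` and `X^m`. -/
noncomputable def tensFun {k m : ℕ} (μ : (Fin k → X) → ℝ) (ν : (Fin m → X) → ℝ) :
    (Fin (k + m) → X) → ℝ :=
  fun y => μ (fun i => y (Fin.castAdd m i)) * ν (fun j => y (Fin.natAdd k j))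

/-- Re-indexing along an equality of dimensions. -/
def castFun {m n : ℕ} (h : m = n) (μ : (Fin m → X) → ℝ) : (Fin n → X) → ℝ :=
  fun y => μ (fun i => y (Fin.cast h i))

/-- The product measure `ω^{⊗n}` (and likewise the tensor power `ξ^{⊗n}` of a function). -/
noncomputable def prodMeas (ω : X → ℝ) (n : ℕ) : (Fin n → X) → ℝ :=
  fun y => ∏ i, ω (y i)

/-- A function on `X^n` is symmetric. -/
def IsSymmFun {n : ℕ} (f : (Fin n → X) → ℝ) : Prop :=
  ∀ (π : Equiv.Perm (Fin n)) (y : Fin n → X), f (y ∘ π) = f y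

end Defs

/-- The set of surjections `Fin n → Fin k`; these correspond to set partitions of
`{1,…,n}` into `k` nonempty blocks together with an ordering of the blocks. -/
noncomputable def surjs (n k : ℕ) : Finset (Fin n → Fin k) :=
  Finset.univ.filter (fun g => Function.Surjective g)

/-- Cardinality of the fiber `g⁻¹(i)` (the size of block `i`). -/
def fiberCard {n k : ℕ} (g : Fin n → Fin k) (i : Fin k) : ℕ :=
  (Finset.univ.filter (fun j => g j = i)).card

section Ops

variable {X : Type*} [Fintype X] [DecidableEq X]

/-- Stirling operator of the second kind `S(n,k) = Σ_{λ ∈ UP(n,k)} D_λ`: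
summing the substitute-and-symmetrize operators over unordered partitions of `{1,…,n}`
into `k` nonempty blocks is the same as summing `f(y ∘ g)` over the surjections
`g : Fin n → Fin k` and dividing by `k!`. -/
noncomputable def Sop (n k : ℕ) (f : (Fin n → X) → ℝ) : (Fin k → X) → ℝ :=
  fun y => (∑ g ∈ surjs n k, f (y ∘ g)) / k.factorial

/-- Unsigned Stirling operator of the first kind
`c(n,k) = Σ_{λ={λ₁,…,λ_k} ∈ UP(n,k)} (|λ₁|−1)!⋯(|λ_k|−1)! · D_λ`. -/
noncomputable def cop (n k : ℕ) (f : (Fin n → X) → ℝ) : (Fin k → X) → ℝ :=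
  fun y => (∑ g ∈ surjs n k, (∏ i : Fin k, ((fiberCard g i - 1).factorial : ℝ)) * f (y ∘ g)) /
    k.factorial

/-- Stirling operator of the first kind `s(n,k) = (−1)^{n−k} c(n,k)`. -/
noncomputable def sop (n k : ℕ) (f : (Fin n → X) → ℝ) : (Fin k → X) → ℝ :=
  fun y => (-1 : ℝ) ^ (n - k) * cop n k f y

/-- Lah operator `L(n,k) = Σ_{λ={λ₁,…,λ_k} ∈ UP(n,k)} |λ₁|!⋯|λ_k|! · D_λ`. -/
noncomputable def Lop (n k : ℕ) (f : (Fin n → X) → ℝ) : (Fin k → X) → ℝ :=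
  fun y => (∑ g ∈ surjs n k, (∏ i : Fin k, ((fiberCard g i).factorial : ℝ)) * f (y ∘ g)) /
    k.factorial

end Ops


section LahAux
open Function

open Function

lemma mem_surjs {n k : ℕ} {g : Fin n → Fin k} : g ∈ surjs n k ↔ Surjective g := by
  simp [surjs]

lemma surjs_empty_of_lt {n k : ℕ} (h : n < k) : surjs n k = ∅ := by
  ext g
  simp only [mem_surjs, Finset.notMem_empty, iff_false]
  intro hs
  exact absurd (Fintype.card_le_of_surjective g hs) (by simpa using h)

lemma surjs_zero_empty {n : ℕ} (hn : 0 < n) : surjs n 0 = ∅ := by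
  ext g
  simp only [Finset.notMem_empty, iff_false]
  intro _
  exact (g ⟨0, hn⟩).elim0

lemma fiberCard_eq_sum {n k : ℕ} (g : Fin n → Fin k) (l : Fin k) :
    fiberCard g l = ∑ j : Fin n, if g j = l then 1 else 0 := by
  rw [fiberCard, Finset.card_filter]

lemma fiberCard_pos {n k : ℕ} {g : Fin n → Fin k} (hg : Surjective g) (l : Fin k) :
    0 < fiberCard g l := by
  obtain ⟨a, ha⟩ := hg l
  exact Finset.card_pos.mpr ⟨a, by simp [ha]⟩

lemma fiberCard_snoc {n k : ℕ} (g : Fin n → Fin k) (l₀ l : Fin k) :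
    fiberCard (Fin.snoc g l₀) l = fiberCard g l + if l₀ = l then 1 else 0 := by
  rw [fiberCard_eq_sum, fiberCard_eq_sum, Fin.sum_univ_castSucc]
  simp [Fin.snoc_castSucc, Fin.snoc_last]

lemma fiberCard_comp_perm {n k : ℕ} (g : Fin n → Fin k) (π : Equiv.Perm (Fin n)) (l : Fin k) :
    fiberCard (g ∘ π) l = fiberCard g l := by
  rw [fiberCard_eq_sum, fiberCard_eq_sum]
  exact Equiv.sum_comp π (fun j => if g j = l then (1:ℕ) else 0)

lemma sum_fiberCard_filter {n k i : ℕ} (g : Fin n → Fin k) (h : Fin k → Fin i) (j₀ : Fin i) :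
    ∑ l ∈ Finset.univ.filter (fun l => h l = j₀), fiberCard g l = fiberCard (h ∘ g) j₀ := by
  unfold fiberCard
  rw [Finset.card_eq_sum_card_fiberwise
    (f := g) (t := Finset.univ.filter (fun l => h l = j₀)) (by intro x hx; simp_all)]
  apply Finset.sum_congr rfl
  intro l hl
  simp only [Finset.mem_filter, Finset.mem_univ, true_and] at hl
  congr 1
  ext a
  simp only [Finset.mem_filter, Finset.mem_univ, true_and, Function.comp_apply]
  constructor
  · exact fun h2 => ⟨by rw [h2, hl], h2⟩
  · exact fun h2 => h2.2

lemma sum_fiberCard {n k : ℕ} (g : Fin n → Fin k) :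
    ∑ l : Fin k, fiberCard g l = n := by
  unfold fiberCard
  rw [← Finset.card_eq_sum_card_fiberwise (f := g) (t := Finset.univ) (by simp)]
  simp

lemma fiberCard_eq_one {n : ℕ} {g : Fin n → Fin n} (hg : Surjective g) (l : Fin n) :
    fiberCard g l = 1 := by
  by_contra hne
  have h2 : 2 ≤ fiberCard g l := by
    have := fiberCard_pos hg l; omega
  have : ∑ l : Fin n, 1 < ∑ l' : Fin n, fiberCard g l' := by
    apply Finset.sum_lt_sum (fun i _ => fiberCard_pos hg i)
    exact ⟨l, Finset.mem_univ l, by omega⟩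
  rw [sum_fiberCard] at this
  simp at this

noncomputable def Tpairs (N i k : ℕ) (σ : Fin N → Fin i) : Finset ((Fin k → Fin i) × (Fin N → Fin k)) :=
  ((surjs k i) ×ˢ (surjs N k)).filter (fun p => p.1 ∘ p.2 = σ)

noncomputable def pweight {N i k : ℕ} (p : (Fin k → Fin i) × (Fin N → Fin k)) : ℝ :=
  (∏ j, ((fiberCard p.1 j).factorial : ℝ)) * ∏ l, ((fiberCard p.2 l).factorial : ℝ)

noncomputable def Usum (N i k : ℕ) (σ : Fin N → Fin i) : ℝ :=
  ∑ p ∈ Tpairs N i k σ, pweight p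

noncomputable def U1sum (N i k : ℕ) (σ : Fin N → Fin i) (j₀ : Fin i) : ℝ :=
  ∑ p ∈ Tpairs N i k σ, (fiberCard p.1 j₀ : ℝ) * pweight p

noncomputable def Vsum (N i : ℕ) (σ : Fin N → Fin i) : ℝ :=
  ∑ k ∈ Finset.range N, (-1 : ℝ) ^ (N - (k+1)) * (Usum N i (k+1) σ / ((k+1).factorial : ℝ))

open Function

lemma mem_Tpairs {N i k : ℕ} {σ : Fin N → Fin i} {p : (Fin k → Fin i) × (Fin N → Fin k)} :
    p ∈ Tpairs N i k σ ↔ Surjective p.1 ∧ Surjective p.2 ∧ p.1 ∘ p.2 = σ := by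
  simp [Tpairs, mem_surjs, and_assoc]

lemma Tpairs_empty_big {N i k : ℕ} (h : N < k) (σ : Fin N → Fin i) : Tpairs N i k σ = ∅ := by
  ext p
  simp only [mem_Tpairs, Finset.notMem_empty, iff_false]
  rintro ⟨-, h2, -⟩
  exact absurd (Fintype.card_le_of_surjective p.2 h2) (by simpa using h)

lemma Usum_zero {N i : ℕ} (hN : 0 < N) (σ : Fin N → Fin i) : Usum N i 0 σ = 0 := by
  have : Tpairs N i 0 σ = ∅ := by
    ext p
    simp only [mem_Tpairs, Finset.notMem_empty, iff_false]
    rintro ⟨-, h2, -⟩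
    exact (p.2 ⟨0, hN⟩).elim0
  simp [Usum, this]

lemma U1sum_zero {N i : ℕ} (hN : 0 < N) (σ : Fin N → Fin i) (j₀ : Fin i) :
    U1sum N i 0 σ j₀ = 0 := by
  have : Tpairs N i 0 σ = ∅ := by
    ext p
    simp only [mem_Tpairs, Finset.notMem_empty, iff_false]
    rintro ⟨-, h2, -⟩
    exact (p.2 ⟨0, hN⟩).elim0
  simp [U1sum, this]

lemma Usum_big {N i k : ℕ} (h : N < k) (σ : Fin N → Fin i) : Usum N i k σ = 0 := by
  simp [Usum, Tpairs_empty_big h]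

lemma U1sum_big {N i k : ℕ} (h : N < k) (σ : Fin N → Fin i) (j₀ : Fin i) :
    U1sum N i k σ j₀ = 0 := by
  simp [U1sum, Tpairs_empty_big h]

/-- permutation invariance -/
lemma Usum_comp_perm (N i k : ℕ) (σ : Fin N → Fin i) (π : Equiv.Perm (Fin N)) :
    Usum N i k (σ ∘ π) = Usum N i k σ := by
  unfold Usum
  apply Finset.sum_nbij' (i := fun p => (p.1, p.2 ∘ π.symm)) (j := fun p => (p.1, p.2 ∘ π))
  · intro p hp
    rw [mem_Tpairs] at hp ⊢
    refine ⟨hp.1, hp.2.1.comp π.symm.surjective, ?_⟩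
    have := hp.2.2
    funext a
    have h2 := congrFun this (π.symm a)
    simpa using h2
  · intro p hp
    rw [mem_Tpairs] at hp ⊢
    refine ⟨hp.1, hp.2.1.comp π.surjective, ?_⟩
    have := hp.2.2
    funext a
    exact congrFun this (π a)
  · intro p hp; ext <;> simp
  · intro p hp; ext <;> simp
  · intro p hp
    unfold pweight
    congr 1
    apply Finset.prod_congr rfl
    intro l _
    rw [fiberCard_comp_perm (g := p.2) π.symm l]

lemma Vsum_comp_perm (N i : ℕ) (σ : Fin N → Fin i) (π : Equiv.Perm (Fin N)) :
    Vsum N i (σ ∘ π) = Vsum N i σ := by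
  unfold Vsum
  exact Finset.sum_congr rfl fun k _ => by rw [Usum_comp_perm]


open Function

lemma snoc_self {n : ℕ} {α : Sort*} (g : Fin (n+1) → α) :
    Fin.snoc (g ∘ Fin.castSucc) (g (Fin.last n)) = g := by
  funext x
  refine Fin.lastCases ?_ ?_ x
  · simp
  · intro a; simp

lemma prod_factorial_add_ite {k : ℕ} (c : Fin k → ℕ) (l₀ : Fin k) :
    (∏ l, (((c l) + if l₀ = l then 1 else 0).factorial : ℝ))
      = ((c l₀ : ℝ) + 1) * ∏ l, ((c l).factorial : ℝ) := by
  rw [← Finset.mul_prod_erase Finset.univ _ (Finset.mem_univ l₀),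
      ← Finset.mul_prod_erase Finset.univ (fun l => ((c l).factorial : ℝ)) (Finset.mem_univ l₀)]
  have h1 : ∀ l ∈ Finset.univ.erase l₀,
      (((c l) + if l₀ = l then 1 else 0).factorial : ℝ) = ((c l).factorial : ℝ) := by
    intro l hl
    rw [Finset.mem_erase] at hl
    simp [(Ne.symm hl.1 : ¬ l₀ = l)]
  rw [Finset.prod_congr rfl h1]
  have h0 : ((c l₀) + if l₀ = l₀ then 1 else 0) = c l₀ + 1 := by simp
  rw [h0, Nat.factorial_succ]
  push_cast
  ring

lemma fiberCard_castSucc_last {n' i : ℕ} (σ : Fin (n'+1) → Fin i) (j : Fin i) :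
    fiberCard σ j = fiberCard (σ ∘ Fin.castSucc) j + if σ (Fin.last n') = j then 1 else 0 := by
  rw [fiberCard_eq_sum, fiberCard_eq_sum, Fin.sum_univ_castSucc]
  simp [Function.comp]

lemma surjective_comp_castSucc {n' k : ℕ} {g : Fin (n'+1) → Fin k} (hg : Surjective g)
    (h2 : fiberCard g (g (Fin.last n')) ≠ 1) : Surjective (g ∘ Fin.castSucc) := by
  intro l
  obtain ⟨a, ha⟩ := hg l
  rcases eq_or_ne a (Fin.last n') with rfl | hne
  · have hcard : 1 < fiberCard g (g (Fin.last n')) := by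
      have := fiberCard_pos hg (g (Fin.last n')); omega
    obtain ⟨x, hx, y, hy, hxy⟩ := Finset.one_lt_card.mp hcard
    simp only [Finset.mem_filter, Finset.mem_univ, true_and] at hx hy
    have hz : ∃ z, z ≠ Fin.last n' ∧ g z = g (Fin.last n') := by
      rcases eq_or_ne x (Fin.last n') with rfl | hx'
      · exact ⟨y, fun h => hxy h.symm, hy⟩
      · exact ⟨x, hx', hx⟩
    obtain ⟨z, hz1, hz2⟩ := hz
    obtain ⟨z', rfl⟩ := Fin.exists_castSucc_eq.mpr hz1
    exact ⟨z', by rw [← ha]; exact hz2⟩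
  · obtain ⟨a', rfl⟩ := Fin.exists_castSucc_eq.mpr hne
    exact ⟨a', ha⟩

lemma caseA {n' i k : ℕ} (σ : Fin (n'+1) → Fin i) :
    ∑ p ∈ (Tpairs (n'+1) i k σ).filter
        (fun p => fiberCard p.2 (p.2 (Fin.last n')) ≠ 1), pweight p
    = ∑ q ∈ Tpairs n' i k (σ ∘ Fin.castSucc),
        (((fiberCard (σ ∘ Fin.castSucc) (σ (Fin.last n')) : ℕ) : ℝ)
          + (fiberCard q.1 (σ (Fin.last n')) : ℝ)) * pweight q := by
  have step1 : ∑ p ∈ (Tpairs (n'+1) i k σ).filter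
        (fun p => fiberCard p.2 (p.2 (Fin.last n')) ≠ 1), pweight p
      = ∑ ql ∈ ((Tpairs n' i k (σ ∘ Fin.castSucc)) ×ˢ (Finset.univ : Finset (Fin k))).filter
            (fun ql => ql.1.1 ql.2 = σ (Fin.last n')),
          ((fiberCard ql.1.2 ql.2 : ℝ) + 1) * pweight ql.1 := by
    apply Finset.sum_nbij' (i := fun p => ((p.1, p.2 ∘ Fin.castSucc), p.2 (Fin.last n')))
      (j := fun ql => (ql.1.1, Fin.snoc ql.1.2 ql.2))
    · intro p hp
      rw [Finset.mem_filter] at hp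
      obtain ⟨hp1, hp2⟩ := hp
      rw [mem_Tpairs] at hp1
      rw [Finset.mem_filter, Finset.mem_product, mem_Tpairs]
      refine ⟨⟨⟨hp1.1, surjective_comp_castSucc hp1.2.1 hp2, ?_⟩, Finset.mem_univ _⟩, ?_⟩
      · funext a; exact congrFun hp1.2.2 (Fin.castSucc a)
      · exact congrFun hp1.2.2 (Fin.last n')
    · intro ql hql
      rw [Finset.mem_filter, Finset.mem_product, mem_Tpairs] at hql
      obtain ⟨⟨⟨hs1, hs2, hs3⟩, -⟩, hcond⟩ := hql
      rw [Finset.mem_filter, mem_Tpairs]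
      refine ⟨⟨hs1, ?_, ?_⟩, ?_⟩
      · intro l
        obtain ⟨a, ha⟩ := hs2 l
        exact ⟨Fin.castSucc a, by simp [ha]⟩
      · funext x
        refine Fin.lastCases ?_ ?_ x
        · simp [hcond]
        · intro a
          simp only [Function.comp_apply, Fin.snoc_castSucc]
          exact congrFun hs3 a
      · show fiberCard (Fin.snoc ql.1.2 ql.2 : Fin (n'+1) → Fin k)
            ((Fin.snoc ql.1.2 ql.2 : Fin (n'+1) → Fin k) (Fin.last n')) ≠ 1
        rw [Fin.snoc_last, fiberCard_snoc, if_pos rfl]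
        have := fiberCard_pos hs2 ql.2
        omega
    · intro p hp
      exact Prod.ext rfl (snoc_self p.2)
    · intro ql hql
      refine Prod.ext (Prod.ext rfl ?_) ?_
      · show (Fin.snoc ql.1.2 ql.2 : Fin (n'+1) → Fin k) ∘ Fin.castSucc = ql.1.2
        funext a
        simp [Fin.snoc_castSucc]
      · show (Fin.snoc ql.1.2 ql.2 : Fin (n'+1) → Fin k) (Fin.last n') = ql.2
        exact Fin.snoc_last _ _
    · intro p hp
      unfold pweight
      simp only
      have h3 : ∀ l, fiberCard p.2 l
          = fiberCard (p.2 ∘ Fin.castSucc) l + if p.2 (Fin.last n') = l then 1 else 0 :=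
        fun l => fiberCard_castSucc_last p.2 l
      have h4 : (∏ l : Fin k, ((fiberCard p.2 l).factorial : ℝ))
          = ((fiberCard (p.2 ∘ Fin.castSucc) (p.2 (Fin.last n')) : ℝ) + 1)
            * ∏ l : Fin k, ((fiberCard (p.2 ∘ Fin.castSucc) l).factorial : ℝ) := by
        rw [Finset.prod_congr rfl (fun l _ => by rw [h3 l])]
        exact prod_factorial_add_ite _ _
      rw [h4]
      ring
  rw [step1, Finset.sum_filter, Finset.sum_product]
  apply Finset.sum_congr rfl
  intro q hq
  rw [mem_Tpairs] at hq
  have : ∑ l₀ : Fin k, (if q.1 l₀ = σ (Fin.last n') then ((fiberCard q.2 l₀ : ℝ) + 1) * pweight q else 0)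
      = (∑ l₀ ∈ Finset.univ.filter (fun l₀ => q.1 l₀ = σ (Fin.last n')),
          ((fiberCard q.2 l₀ : ℝ) + 1)) * pweight q := by
    rw [Finset.sum_filter, Finset.sum_mul]
    apply Finset.sum_congr rfl
    intro l₀ _
    split <;> simp
  rw [this]
  congr 1
  rw [Finset.sum_add_distrib]
  congr 1
  · rw [← Nat.cast_sum]
    rw [sum_fiberCard_filter q.2 q.1 (σ (Fin.last n')), hq.2.2]
  · rw [Finset.sum_const, fiberCard]
    simp

open Function

def unSucc {k : ℕ} (hk : 0 < k) (l₀ : Fin (k+1)) (v : Fin (k+1)) : Fin k :=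
  ((finSuccEquiv' l₀) v).getD ⟨0, hk⟩

lemma unSucc_succAbove {k : ℕ} (hk : 0 < k) (l₀ : Fin (k+1)) (u : Fin k) :
    unSucc hk l₀ (l₀.succAbove u) = u := by
  simp [unSucc]

lemma succAbove_unSucc {k : ℕ} (hk : 0 < k) {l₀ v : Fin (k+1)} (h : v ≠ l₀) :
    l₀.succAbove (unSucc hk l₀ v) = v := by
  obtain ⟨u, rfl⟩ := Fin.exists_succAbove_eq h
  rw [unSucc_succAbove]

lemma fiberCard_insertNth {k i : ℕ} (l₀ : Fin (k+1)) (j₀ : Fin i) (h' : Fin k → Fin i)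
    (j : Fin i) :
    fiberCard (l₀.insertNth j₀ h') j = fiberCard h' j + if j₀ = j then 1 else 0 := by
  rw [fiberCard_eq_sum, fiberCard_eq_sum, Fin.sum_univ_succAbove _ l₀]
  rw [Fin.insertNth_apply_same]
  have h5 : ∀ u : Fin k, (l₀.insertNth j₀ h' : Fin (k+1) → Fin i) (l₀.succAbove u) = h' u := by
    intro u; simp
  rw [Finset.sum_congr rfl (fun u _ => by rw [h5 u])]
  omega

lemma fiberCard_comp_inj {n k m : ℕ} (g : Fin n → Fin k) {e : Fin k → Fin m}
    (he : Injective e) (u : Fin k) : fiberCard (e ∘ g) (e u) = fiberCard g u := by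
  rw [fiberCard_eq_sum, fiberCard_eq_sum]
  apply Finset.sum_congr rfl
  intro a _
  simp [he.eq_iff]

lemma fiberCard_succAbove_comp_self {n k : ℕ} (g : Fin n → Fin k) (l₀ : Fin (k+1)) :
    fiberCard (l₀.succAbove ∘ g) l₀ = 0 := by
  rw [fiberCard, Finset.card_eq_zero]
  ext a
  simp only [Finset.mem_filter, Finset.mem_univ, true_and, Function.comp_apply,
    Finset.notMem_empty, iff_false]
  exact Fin.succAbove_ne l₀ (g a)

lemma ne_last_fiber {n' k1 : ℕ} {g : Fin (n'+1) → Fin k1}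
    (hfib : fiberCard g (g (Fin.last n')) = 1) (a : Fin n') :
    g (Fin.castSucc a) ≠ g (Fin.last n') := by
  intro hcontra
  have h2 : ({Fin.castSucc a, Fin.last n'} : Finset (Fin (n'+1)))
      ⊆ Finset.univ.filter (fun x => g x = g (Fin.last n')) := by
    intro x hx
    simp only [Finset.mem_insert, Finset.mem_singleton] at hx
    rcases hx with rfl | rfl <;> simp [hcontra]
  have hcard2 : ({Fin.castSucc a, Fin.last n'} : Finset (Fin (n'+1))).card = 2 := by
    rw [Finset.card_insert_of_notMem (by simp [Fin.ne_of_lt (Fin.castSucc_lt_last a)]),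
      Finset.card_singleton]
  have h3 : 2 ≤ fiberCard g (g (Fin.last n')) := by
    calc 2 = ({Fin.castSucc a, Fin.last n'} : Finset (Fin (n'+1))).card := hcard2.symm
      _ ≤ _ := Finset.card_le_card h2
  omega

lemma caseB_weight {n' i k : ℕ} (j₀ : Fin i) (l₀ : Fin (k+1)) (h' : Fin k → Fin i)
    (g'' : Fin n' → Fin k) :
    pweight ((l₀.insertNth j₀ h' : Fin (k+1) → Fin i),
        (Fin.snoc (l₀.succAbove ∘ g'') l₀ : Fin (n'+1) → Fin (k+1)))
      = ((fiberCard h' j₀ : ℝ) + 1) * pweight (h', g'') := by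
  unfold pweight
  simp only
  have h1 : (∏ j, ((fiberCard (l₀.insertNth j₀ h' : Fin (k+1) → Fin i) j).factorial : ℝ))
      = ((fiberCard h' j₀ : ℝ) + 1) * ∏ j, ((fiberCard h' j).factorial : ℝ) := by
    rw [Finset.prod_congr rfl (fun j _ => by rw [fiberCard_insertNth l₀ j₀ h' j])]
    exact prod_factorial_add_ite _ _
  have h2 : (∏ l, ((fiberCard (Fin.snoc (l₀.succAbove ∘ g'') l₀ : Fin (n'+1) → Fin (k+1)) l).factorial : ℝ))
      = ∏ u, ((fiberCard g'' u).factorial : ℝ) := by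
    rw [Fin.prod_univ_succAbove _ l₀]
    have hat : fiberCard (Fin.snoc (l₀.succAbove ∘ g'') l₀ : Fin (n'+1) → Fin (k+1)) l₀ = 1 := by
      rw [fiberCard_snoc, if_pos rfl, fiberCard_succAbove_comp_self]
    have hoth : ∀ u : Fin k,
        fiberCard (Fin.snoc (l₀.succAbove ∘ g'') l₀ : Fin (n'+1) → Fin (k+1)) (l₀.succAbove u)
          = fiberCard g'' u := by
      intro u
      rw [fiberCard_snoc, if_neg (Ne.symm (Fin.succAbove_ne l₀ u)),
        fiberCard_comp_inj g'' (Fin.succAbove_right_injective) u]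
      omega
    rw [hat]
    rw [Finset.prod_congr rfl (fun u _ => by rw [hoth u])]
    simp
  rw [h1, h2]
  ring

lemma caseB {n' i k : ℕ} (hn' : 0 < n') (σ : Fin (n'+1) → Fin i) (hσ : Surjective σ)
    (hm : 2 ≤ fiberCard σ (σ (Fin.last n'))) :
    ∑ p ∈ (Tpairs (n'+1) i (k+1) σ).filter
        (fun p => fiberCard p.2 (p.2 (Fin.last n')) = 1), pweight p
    = ((k:ℝ)+1) * ∑ q ∈ Tpairs n' i k (σ ∘ Fin.castSucc),
        ((fiberCard q.1 (σ (Fin.last n')) : ℝ) + 1) * pweight q := by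
  rcases Nat.eq_zero_or_pos k with rfl | hk
  · have hL : (Tpairs (n'+1) i 1 σ).filter
        (fun p => fiberCard p.2 (p.2 (Fin.last n')) = 1) = ∅ := by
      ext p
      simp only [Finset.mem_filter, mem_Tpairs, Finset.notMem_empty, iff_false, not_and]
      rintro ⟨-, -, -⟩ hfib
      have hall : ∀ a, p.2 a = p.2 (Fin.last n') := fun a => Subsingleton.elim _ _
      have hval : fiberCard p.2 (p.2 (Fin.last n')) = n' + 1 := by
        rw [fiberCard, Finset.filter_true_of_mem (fun a _ => hall a)]
        simp
      omega
    have hR : Tpairs n' i 0 (σ ∘ Fin.castSucc) = ∅ := by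
      ext q
      simp only [mem_Tpairs, Finset.notMem_empty, iff_false, not_and]
      exact fun h => (q.2 ⟨0, hn'⟩).elim0
    rw [hL, hR]
    simp
  · have key : ∑ ql ∈ (Tpairs n' i k (σ ∘ Fin.castSucc)) ×ˢ (Finset.univ : Finset (Fin (k+1))),
          ((fiberCard ql.1.1 (σ (Fin.last n')) : ℝ) + 1) * pweight ql.1
        = ∑ p ∈ (Tpairs (n'+1) i (k+1) σ).filter
            (fun p => fiberCard p.2 (p.2 (Fin.last n')) = 1), pweight p := by
      apply Finset.sum_nbij'
        (i := fun ql => ((ql.2.insertNth (σ (Fin.last n')) ql.1.1 : Fin (k+1) → Fin i),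
          (Fin.snoc (ql.2.succAbove ∘ ql.1.2) ql.2 : Fin (n'+1) → Fin (k+1))))
        (j := fun p => ((p.1 ∘ (p.2 (Fin.last n')).succAbove,
          fun a => unSucc hk (p.2 (Fin.last n')) (p.2 (Fin.castSucc a))), p.2 (Fin.last n')))
      · -- forward membership
        intro ql hql
        rw [Finset.mem_product, mem_Tpairs] at hql
        obtain ⟨⟨hs1, hs2, hs3⟩, -⟩ := hql
        set h' := ql.1.1
        set g'' := ql.1.2
        set l₀ := ql.2
        rw [Finset.mem_filter, mem_Tpairs]
        refine ⟨⟨?_, ?_, ?_⟩, ?_⟩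
        · intro j
          obtain ⟨u, hu⟩ := hs1 j
          refine ⟨l₀.succAbove u, ?_⟩
          show (l₀.insertNth (σ (Fin.last n')) h' : Fin (k+1) → Fin i) (l₀.succAbove u) = j
          simpa using hu
        · intro l
          rcases eq_or_ne l l₀ with rfl | hne
          · refine ⟨Fin.last n', ?_⟩
            show (Fin.snoc (l₀.succAbove ∘ g'') l₀ : Fin (n'+1) → Fin (k+1)) (Fin.last n') = l₀
            exact Fin.snoc_last _ _
          · obtain ⟨u, hu⟩ := Fin.exists_succAbove_eq hne
            obtain ⟨a, ha⟩ := hs2 u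
            refine ⟨Fin.castSucc a, ?_⟩
            show (Fin.snoc (l₀.succAbove ∘ g'') l₀ : Fin (n'+1) → Fin (k+1)) (Fin.castSucc a) = l
            rw [Fin.snoc_castSucc]
            simp only [Function.comp_apply, ha, hu]
        · funext x
          refine Fin.lastCases ?_ ?_ x
          · show (l₀.insertNth (σ (Fin.last n')) h' : Fin (k+1) → Fin i)
              ((Fin.snoc (l₀.succAbove ∘ g'') l₀ : Fin (n'+1) → Fin (k+1)) (Fin.last n'))
              = σ (Fin.last n')
            rw [Fin.snoc_last, Fin.insertNth_apply_same]
          · intro a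
            show (l₀.insertNth (σ (Fin.last n')) h' : Fin (k+1) → Fin i)
              ((Fin.snoc (l₀.succAbove ∘ g'') l₀ : Fin (n'+1) → Fin (k+1)) (Fin.castSucc a))
              = σ (Fin.castSucc a)
            rw [Fin.snoc_castSucc]
            show (l₀.insertNth (σ (Fin.last n')) h' : Fin (k+1) → Fin i) (l₀.succAbove (g'' a))
              = σ (Fin.castSucc a)
            simpa using congrFun hs3 a
        · show fiberCard (Fin.snoc (l₀.succAbove ∘ g'') l₀ : Fin (n'+1) → Fin (k+1))
            ((Fin.snoc (l₀.succAbove ∘ g'') l₀ : Fin (n'+1) → Fin (k+1)) (Fin.last n')) = 1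
          rw [Fin.snoc_last, fiberCard_snoc, if_pos rfl, fiberCard_succAbove_comp_self]
      · -- backward membership
        intro p hp
        rw [Finset.mem_filter, mem_Tpairs] at hp
        obtain ⟨⟨hh, hg, hcomp⟩, hfib⟩ := hp
        have hl₀ : p.1 (p.2 (Fin.last n')) = σ (Fin.last n') := congrFun hcomp (Fin.last n')
        have f1 : ∀ a : Fin n', p.2 (Fin.castSucc a) ≠ p.2 (Fin.last n') :=
          fun a => ne_last_fiber hfib a
        rw [Finset.mem_product, mem_Tpairs]
        refine ⟨⟨?_, ?_, ?_⟩, Finset.mem_univ _⟩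
        · -- h'' surjective
          intro j
          rcases eq_or_ne j (σ (Fin.last n')) with rfl | hne
          · have hc2 : 1 < fiberCard σ (σ (Fin.last n')) := hm
            obtain ⟨x, hx, z, hz, hxz⟩ := Finset.one_lt_card.mp hc2
            simp only [Finset.mem_filter, Finset.mem_univ, true_and] at hx hz
            have hex : ∃ w, w ≠ Fin.last n' ∧ σ w = σ (Fin.last n') := by
              rcases eq_or_ne x (Fin.last n') with rfl | hx'
              · exact ⟨z, fun h => hxz h.symm, hz⟩
              · exact ⟨x, hx', hx⟩
            obtain ⟨w, hw1, hw2⟩ := hex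
            obtain ⟨a, rfl⟩ := Fin.exists_castSucc_eq.mpr hw1
            obtain ⟨u, hu⟩ := Fin.exists_succAbove_eq (f1 a)
            refine ⟨u, ?_⟩
            show p.1 ((p.2 (Fin.last n')).succAbove u) = σ (Fin.last n')
            rw [hu, ← hw2]
            exact congrFun hcomp (Fin.castSucc a)
          · obtain ⟨l, hl⟩ := hh j
            have hlne : l ≠ p.2 (Fin.last n') := by
              intro hcontra
              rw [hcontra, hl₀] at hl
              exact hne hl.symm
            obtain ⟨u, hu⟩ := Fin.exists_succAbove_eq hlne
            exact ⟨u, by show p.1 ((p.2 (Fin.last n')).succAbove u) = j; rw [hu, hl]⟩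
        · -- g'' surjective
          intro u
          have hne : (p.2 (Fin.last n')).succAbove u ≠ p.2 (Fin.last n') :=
            Fin.succAbove_ne _ u
          obtain ⟨b, hb⟩ := hg ((p.2 (Fin.last n')).succAbove u)
          have hbne : b ≠ Fin.last n' := by
            intro hcontra
            rw [hcontra] at hb
            exact hne hb.symm
          obtain ⟨a, rfl⟩ := Fin.exists_castSucc_eq.mpr hbne
          refine ⟨a, ?_⟩
          show unSucc hk (p.2 (Fin.last n')) (p.2 (Fin.castSucc a)) = u
          rw [hb, unSucc_succAbove]
        · -- comp
          funext a
          show p.1 ((p.2 (Fin.last n')).succAbove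
            (unSucc hk (p.2 (Fin.last n')) (p.2 (Fin.castSucc a)))) = σ (Fin.castSucc a)
          rw [succAbove_unSucc hk (f1 a)]
          exact congrFun hcomp (Fin.castSucc a)
      · -- left inverse
        rintro ⟨⟨h', g''⟩, l₀⟩ hql
        simp only [Fin.snoc_last]
        refine Prod.ext (Prod.ext ?_ ?_) rfl
        · funext u
          show (l₀.insertNth (σ (Fin.last n')) h' : Fin (k+1) → Fin i) (l₀.succAbove u) = h' u
          simp
        · funext a
          simp only [Fin.snoc_castSucc, Function.comp_apply]
          exact unSucc_succAbove hk l₀ (g'' a)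
      · -- right inverse
        intro p hp
        rw [Finset.mem_filter, mem_Tpairs] at hp
        obtain ⟨⟨hh, hg, hcomp⟩, hfib⟩ := hp
        have hl₀ : p.1 (p.2 (Fin.last n')) = σ (Fin.last n') := congrFun hcomp (Fin.last n')
        have f1 : ∀ a : Fin n', p.2 (Fin.castSucc a) ≠ p.2 (Fin.last n') :=
          fun a => ne_last_fiber hfib a
        refine Prod.ext ?_ ?_
        · show (p.2 (Fin.last n')).insertNth (σ (Fin.last n'))
            (p.1 ∘ (p.2 (Fin.last n')).succAbove) = p.1
          funext l
          rcases eq_or_ne l (p.2 (Fin.last n')) with rfl | hne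
          · rw [Fin.insertNth_apply_same]
            exact hl₀.symm
          · obtain ⟨u, rfl⟩ := Fin.exists_succAbove_eq hne
            simp
        · show (Fin.snoc ((p.2 (Fin.last n')).succAbove ∘
            (fun a => unSucc hk (p.2 (Fin.last n')) (p.2 (Fin.castSucc a))))
            (p.2 (Fin.last n')) : Fin (n'+1) → Fin (k+1)) = p.2
          funext x
          refine Fin.lastCases ?_ ?_ x
          · rw [Fin.snoc_last]
          · intro a
            rw [Fin.snoc_castSucc]
            exact succAbove_unSucc hk (f1 a)
      · -- weights
        rintro ⟨⟨h', g''⟩, l₀⟩ hql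
        exact (caseB_weight (σ (Fin.last n')) l₀ h' g'').symm
    rw [← key, Finset.sum_product]
    have hconst : ∀ q ∈ Tpairs n' i k (σ ∘ Fin.castSucc),
        (∑ _l₀ : Fin (k+1), ((fiberCard q.1 (σ (Fin.last n')) : ℝ) + 1) * pweight q)
          = ((k:ℝ)+1) * (((fiberCard q.1 (σ (Fin.last n')) : ℝ) + 1) * pweight q) := by
      intro q _
      rw [Finset.sum_const, Finset.card_univ, Fintype.card_fin, nsmul_eq_mul]
      push_cast
      ring
    rw [Finset.sum_congr rfl hconst, ← Finset.mul_sum]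


open Function

lemma Vsum_rec {n' i : ℕ} (hn' : 1 ≤ n') (σ : Fin (n'+1) → Fin i) (hσ : Surjective σ)
    (hm : 2 ≤ fiberCard σ (σ (Fin.last n'))) :
    Vsum (n'+1) i σ
      = (2 - (fiberCard σ (σ (Fin.last n')) : ℝ)) * Vsum n' i (σ ∘ Fin.castSucc) := by
  set σ' := σ ∘ Fin.castSucc with hσ'
  set j₀ := σ (Fin.last n') with hj₀
  have hsplit : fiberCard σ j₀ = fiberCard σ' j₀ + 1 := by
    rw [fiberCard_castSucc_last σ j₀, if_pos rfl]
  set c : ℝ := (fiberCard σ' j₀ : ℝ) with hc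
  set F : ℕ → ℝ := fun k => Usum n' i k σ' with hF
  set G : ℕ → ℝ := fun k => U1sum n' i k σ' j₀ with hG
  have hsplitU : ∀ k : ℕ, Usum (n'+1) i (k+1) σ
      = (c * F (k+1) + G (k+1)) + ((k:ℝ)+1) * (G k + F k) := by
    intro k
    rw [show Usum (n'+1) i (k+1) σ = ∑ p ∈ Tpairs (n'+1) i (k+1) σ, pweight p from rfl]
    rw [← Finset.sum_filter_add_sum_filter_not (Tpairs (n'+1) i (k+1) σ)
      (fun p => fiberCard p.2 (p.2 (Fin.last n')) = 1) pweight]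
    rw [caseB hn' σ hσ hm, caseA σ]
    have e1 : (∑ q ∈ Tpairs n' i (k+1) σ',
        (((fiberCard σ' j₀ : ℕ) : ℝ) * pweight q + (fiberCard q.1 j₀ : ℝ) * pweight q))
          = c * F (k+1) + G (k+1) := by
      rw [Finset.sum_add_distrib, ← Finset.mul_sum]
      rfl
    have e2 : ∑ q ∈ Tpairs n' i k σ',
        ((fiberCard q.1 j₀ : ℝ) * pweight q + pweight q) = G k + F k := by
      rw [Finset.sum_add_distrib]
      rfl
    have e0 : ∀ (S : Finset ((Fin (k+1) → Fin i) × (Fin n' → Fin (k+1)))),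
        (∑ q ∈ S, (((fiberCard σ' j₀ : ℕ) : ℝ) + (fiberCard q.1 j₀ : ℝ)) * pweight q)
        = ∑ q ∈ S, (((fiberCard σ' j₀ : ℕ) : ℝ) * pweight q + (fiberCard q.1 j₀ : ℝ) * pweight q) :=
      fun S => Finset.sum_congr rfl (fun q _ => by ring)
    have e0' : ∀ (S : Finset ((Fin k → Fin i) × (Fin n' → Fin k))),
        (∑ q ∈ S, ((fiberCard q.1 j₀ : ℝ) + 1) * pweight q)
        = ∑ q ∈ S, ((fiberCard q.1 j₀ : ℝ) * pweight q + pweight q) :=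
      fun S => Finset.sum_congr rfl (fun q _ => by ring)
    rw [e0, e0', e1, e2]
    ring
  have key : Vsum (n'+1) i σ
      = (∑ k ∈ Finset.range (n'+1), (-1:ℝ)^(n'-k) * ((c * F (k+1) + G (k+1)) / ((k+1).factorial : ℝ)))
        + ∑ k ∈ Finset.range (n'+1), (-1:ℝ)^(n'-k) * ((G k + F k) / (k.factorial : ℝ)) := by
    rw [Vsum, ← Finset.sum_add_distrib]
    apply Finset.sum_congr rfl
    intro k hk
    rw [Finset.mem_range] at hk
    have hexp : n' + 1 - (k+1) = n' - k := by omega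
    rw [hexp, hsplitU k]
    have hfac : ((k+1).factorial : ℝ) = ((k:ℝ)+1) * (k.factorial : ℝ) := by
      rw [Nat.factorial_succ]; push_cast; ring
    have hfacpos : (k.factorial : ℝ) ≠ 0 := Nat.cast_ne_zero.mpr (Nat.factorial_ne_zero k)
    have hkk : ((k:ℝ)+1) ≠ 0 := by positivity
    rw [hfac]
    field_simp
  have hS1 : (∑ k ∈ Finset.range (n'+1),
      (-1:ℝ)^(n'-k) * ((c * F (k+1) + G (k+1)) / ((k+1).factorial : ℝ)))
      = ∑ k ∈ Finset.range n',
        (-1:ℝ)^(n'-k) * ((c * F (k+1) + G (k+1)) / ((k+1).factorial : ℝ)) := by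
    rw [Finset.sum_range_succ]
    have hF0 : F (n'+1) = 0 := Usum_big (by omega) σ'
    have hG0 : G (n'+1) = 0 := U1sum_big (by omega) σ' j₀
    rw [hF0, hG0]
    simp
  have hS2 : (∑ k ∈ Finset.range (n'+1), (-1:ℝ)^(n'-k) * ((G k + F k) / (k.factorial : ℝ)))
      = ∑ k ∈ Finset.range n',
        (-1:ℝ)^(n'-(k+1)) * ((G (k+1) + F (k+1)) / ((k+1).factorial : ℝ)) := by
    rw [Finset.sum_range_succ']
    have hF0 : F 0 = 0 := Usum_zero (by omega) σ'
    have hG0 : G 0 = 0 := U1sum_zero (by omega) σ' j₀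
    rw [hF0, hG0]
    simp
  rw [key, hS1, hS2, ← Finset.sum_add_distrib]
  have hrhs : (2 - (fiberCard σ j₀ : ℝ)) * Vsum n' i σ'
      = ∑ k ∈ Finset.range n',
        (2 - (fiberCard σ j₀ : ℝ)) * ((-1:ℝ)^(n'-(k+1)) * (F (k+1) / ((k+1).factorial : ℝ))) := by
    rw [Vsum, Finset.mul_sum]
  rw [hrhs]
  apply Finset.sum_congr rfl
  intro k hk
  rw [Finset.mem_range] at hk
  have hexp : (-1:ℝ)^(n'-k) = -(-1:ℝ)^(n'-(k+1)) := by
    have : n' - k = (n' - (k+1)) + 1 := by omega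
    rw [this, pow_succ]
    ring
  have hcm : (fiberCard σ j₀ : ℝ) = c + 1 := by
    rw [hsplit]; push_cast; ring
  rw [hexp, hcm]
  ring


open Function

lemma two_le_fiberCard {n k : ℕ} {g : Fin n → Fin k} {x y : Fin n} {v : Fin k}
    (hxy : x ≠ y) (hx : g x = v) (hy : g y = v) : 2 ≤ fiberCard g v := by
  have h2 : ({x, y} : Finset (Fin n)) ⊆ Finset.univ.filter (fun z => g z = v) := by
    intro z hz
    simp only [Finset.mem_insert, Finset.mem_singleton] at hz
    rcases hz with rfl | rfl <;> simp [hx, hy]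
  calc 2 = ({x, y} : Finset (Fin n)).card := by
        rw [Finset.card_insert_of_notMem (by simp [hxy]), Finset.card_singleton]
    _ ≤ _ := Finset.card_le_card h2

lemma not_injective_of_two_le_fiberCard {n k : ℕ} {g : Fin n → Fin k} {v : Fin k}
    (h : 2 ≤ fiberCard g v) : ¬ Injective g := by
  obtain ⟨x, hx, y, hy, hxy⟩ := Finset.one_lt_card.mp h
  simp only [Finset.mem_filter, Finset.mem_univ, true_and] at hx hy
  intro hinj
  exact hxy (hinj (hx.trans hy.symm))

lemma card_surjs_self (N : ℕ) : (surjs N N).card = N.factorial := by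
  have : (surjs N N).card = (Finset.univ : Finset (Equiv.Perm (Fin N))).card :=
    Finset.card_bij' (fun g hg => Equiv.ofBijective g
        ⟨(Finite.injective_iff_surjective).mpr (mem_surjs.mp hg), mem_surjs.mp hg⟩)
      (fun e _ => ⇑e)
      (fun g hg => Finset.mem_univ _)
      (fun e _ => mem_surjs.mpr e.surjective)
      (fun g hg => rfl)
      (fun e _ => Equiv.ext (fun x => rfl))
  rw [this, Finset.card_univ, Fintype.card_perm, Fintype.card_fin]

lemma Usum_top {N : ℕ} (hN : 0 < N) (σ : Fin N → Fin N) (hσ : Surjective σ) :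
    Usum N N N σ = (N.factorial : ℝ) := by
  haveI : Nonempty (Fin N) := ⟨⟨0, hN⟩⟩
  have hone : ∀ p ∈ Tpairs N N N σ, pweight p = 1 := by
    intro p hp
    rw [mem_Tpairs] at hp
    unfold pweight
    rw [Finset.prod_eq_one (fun j _ => by rw [fiberCard_eq_one hp.1 j]; norm_num),
      Finset.prod_eq_one (fun l _ => by rw [fiberCard_eq_one hp.2.1 l]; norm_num)]
    norm_num
  rw [Usum, Finset.sum_congr rfl hone, Finset.sum_const, nsmul_eq_mul, mul_one]
  congr 1
  have : (Tpairs N N N σ).card = (surjs N N).card := by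
    refine Finset.card_nbij' (fun p => p.2)
      (fun g => (σ ∘ Function.invFun g, g)) ?_ ?_ ?_ ?_
    · intro p hp
      rw [Finset.mem_coe, mem_Tpairs] at hp
      exact mem_surjs.mpr hp.2.1
    · intro g hg
      have hgs := mem_surjs.mp hg
      have hginj : Injective g := (Finite.injective_iff_surjective).mpr hgs
      apply mem_Tpairs.mpr
      refine ⟨?_, hgs, ?_⟩
      · intro j
        obtain ⟨w, hw⟩ := hσ j
        refine ⟨g w, ?_⟩
        show (σ ∘ Function.invFun g) (g w) = j
        rw [Function.comp_apply, Function.leftInverse_invFun hginj w, hw]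
      · funext x
        simp only [Function.comp_apply]
        rw [Function.leftInverse_invFun hginj x]
    · intro p hp
      rw [Finset.mem_coe, mem_Tpairs] at hp
      refine Prod.ext ?_ rfl
      funext l
      show σ (Function.invFun p.2 l) = p.1 l
      have h5 : p.2 (Function.invFun p.2 l) = l := Function.rightInverse_invFun hp.2.1 l
      have h6 := congrFun hp.2.2 (Function.invFun p.2 l)
      simp only [Function.comp_apply] at h6
      rw [← h6, h5]
    · intro g hg; rfl
  rw [this, card_surjs_self]

lemma Vsum_inj {N i : ℕ} (hN : 1 ≤ N) (σ : Fin N → Fin i) (hσ : Surjective σ)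
    (hinj : Injective σ) : Vsum N i σ = 1 := by
  have hbij : Bijective σ := ⟨hinj, hσ⟩
  have hiN : N = i := by
    have := Fintype.card_of_bijective hbij
    simpa using this
  subst hiN
  obtain ⟨N', rfl⟩ : ∃ N', N = N'+1 := ⟨N-1, by omega⟩
  rw [Vsum]
  rw [Finset.sum_eq_single_of_mem N' (Finset.mem_range.mpr (by omega))]
  · rw [Usum_top (by omega) σ hσ]
    have hne : ((N'+1).factorial : ℝ) ≠ 0 := Nat.cast_ne_zero.mpr (Nat.factorial_ne_zero _)
    rw [Nat.sub_self, pow_zero, one_mul, div_self hne]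
  · intro k hk hkne
    rw [Finset.mem_range] at hk
    have hempty : Tpairs (N'+1) (N'+1) (k+1) σ = ∅ := by
      ext p
      simp only [mem_Tpairs, Finset.notMem_empty, iff_false]
      rintro ⟨h1, h2, h3⟩
      have : Injective p.2 := by
        have : Injective (p.1 ∘ p.2) := h3 ▸ hinj
        exact Injective.of_comp this
      have := Fintype.card_le_of_injective p.2 this
      simp only [Fintype.card_fin] at this
      omega
    rw [show Usum (N'+1) (N'+1) (k+1) σ = ∑ p ∈ Tpairs (N'+1) (N'+1) (k+1) σ, pweight p from rfl,
      hempty]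
    simp

lemma Vsum_eq (n : ℕ) : ∀ i : ℕ, 1 ≤ n → ∀ σ : Fin n → Fin i, Surjective σ →
    Vsum n i σ = if Injective σ then 1 else 0 := by
  induction n using Nat.strong_induction_on with
  | _ n ih =>
    intro i hn σ hσ
    by_cases hinj : Injective σ
    · rw [if_pos hinj]
      exact Vsum_inj hn σ hσ hinj
    · rw [if_neg hinj]
      obtain ⟨a, b, hab, habne⟩ : ∃ a b, σ a = σ b ∧ a ≠ b := by
        rw [Injective] at hinj
        push_neg at hinj
        obtain ⟨a, b, h1, h2⟩ := hinj
        exact ⟨a, b, h1, h2⟩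
      have hn2 : 2 ≤ n := by
        by_contra hcon
        push_neg at hcon
        have hone : n = 1 := by omega
        subst hone
        exact habne (Subsingleton.elim a b)
      obtain ⟨n', rfl⟩ : ∃ n', n = n'+1 := ⟨n-1, by omega⟩
      have hn' : 1 ≤ n' := by omega
      set π : Equiv.Perm (Fin (n'+1)) := Equiv.swap a (Fin.last n') with hπ
      set τ : Fin (n'+1) → Fin i := σ ∘ π with hτ
      have hτs : Surjective τ := hσ.comp π.surjective
      have hτlast : τ (Fin.last n') = σ a := by
        simp [hτ, hπ, Equiv.swap_apply_right]
      have hπb : π b ≠ Fin.last n' := by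
        intro hcon
        have : π b = π a := by rw [hcon, hπ]; simp [Equiv.swap_apply_left]
        exact habne (π.injective this).symm
      have hfib2 : 2 ≤ fiberCard τ (τ (Fin.last n')) := by
        apply two_le_fiberCard (x := Fin.last n') (y := π b) (Ne.symm hπb)
        · rfl
        · show σ (π (π b)) = τ (Fin.last n')
          rw [hτlast]
          have : π (π b) = b := by rw [hπ]; exact Equiv.swap_apply_self _ _ _
          rw [this, ← hab]
      have hVeq : Vsum (n'+1) i σ = Vsum (n'+1) i τ := (Vsum_comp_perm _ _ σ π).symm
      rw [hVeq, Vsum_rec hn' τ hτs hfib2]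
      have hτ's : Surjective (τ ∘ Fin.castSucc) :=
        surjective_comp_castSucc hτs (by omega)
      rw [ih n' (by omega) i hn' _ hτ's]
      rcases eq_or_lt_of_le hfib2 with h2 | h3
      · rw [← h2]
        norm_num
      · have hfc : 2 ≤ fiberCard (τ ∘ Fin.castSucc) (τ (Fin.last n')) := by
          have := fiberCard_castSucc_last τ (τ (Fin.last n'))
          rw [if_pos rfl] at this
          omega
        rw [if_neg (not_injective_of_two_le_fiberCard hfc)]
        ring


lemma sum_Icc_one_eq (n : ℕ) (F : ℕ → ℝ) :
    ∑ k ∈ Finset.Icc 1 n, F k = ∑ k ∈ Finset.range n, F (k+1) := by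
  apply Finset.sum_nbij' (i := fun k => k - 1) (j := fun k => k + 1)
  · intro a ha; rw [Finset.mem_Icc] at ha; rw [Finset.mem_range]; omega
  · intro a ha; rw [Finset.mem_range] at ha; rw [Finset.mem_Icc]; omega
  · intro a ha; rw [Finset.mem_Icc] at ha; omega
  · intro a _; omega
  · intro a ha; rw [Finset.mem_Icc] at ha; congr 1; omega


end LahAux

/-- The Lah operators satisfy the biorthogonality identity
`Σ_{k=1}^{n} (−1)^{n−k} L(k,i) ∘ L(n,k) = δ_{ni} · Id` as operators from symmetric
functions on `X^n` to symmetric functions on `X^i`. -/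
theorem lah_biorthogonality
    {X : Type*} [Fintype X] [DecidableEq X] {i n : ℕ} (hi : 1 ≤ i) (hn : 1 ≤ n)
    (f : (Fin n → X) → ℝ) (hf : IsSymmFun f) :
    ∀ y : Fin i → X,
      (∑ k ∈ Finset.Icc 1 n, (-1 : ℝ) ^ (n - k) * Lop k i (Lop n k f) y)
        = if h : n = i then castFun h f y else 0 := by
  intro y
  have hterm : ∀ k : ℕ, Lop k i (Lop n k f) y
      = (∑ p ∈ (surjs k i) ×ˢ (surjs n k), pweight p * f (y ∘ (p.1 ∘ p.2)))
          / ((k.factorial : ℝ) * (i.factorial : ℝ)) := by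
    intro k
    show (∑ h ∈ surjs k i, (∏ j, ((fiberCard h j).factorial : ℝ)) * Lop n k f (y ∘ h))
        / (i.factorial : ℝ) = _
    have h1 : ∀ h : Fin k → Fin i,
        (∏ j, ((fiberCard h j).factorial : ℝ)) * Lop n k f (y ∘ h)
          = (∑ g ∈ surjs n k, pweight (h, g) * f (y ∘ (h ∘ g))) / (k.factorial : ℝ) := by
      intro h
      show (∏ j, ((fiberCard h j).factorial : ℝ))
          * ((∑ g ∈ surjs n k, (∏ l, ((fiberCard g l).factorial : ℝ)) * f (y ∘ (h ∘ g)))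
            / (k.factorial : ℝ)) = _
      rw [mul_div_assoc', Finset.mul_sum]
      congr 1
      apply Finset.sum_congr rfl
      intro g _
      show (∏ j, ((fiberCard h j).factorial : ℝ))
          * ((∏ l, ((fiberCard g l).factorial : ℝ)) * f (y ∘ (h ∘ g)))
        = pweight (h, g) * f (y ∘ (h ∘ g))
      rw [pweight, ← mul_assoc]
    rw [Finset.sum_congr rfl (fun h _ => h1 h), Finset.sum_product, ← Finset.sum_div, div_div]
  have hgroup : ∀ k : ℕ, (∑ p ∈ (surjs k i) ×ˢ (surjs n k), pweight p * f (y ∘ (p.1 ∘ p.2)))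
      = ∑ ss ∈ surjs n i, (∑ p ∈ Tpairs n i k ss, pweight p) * f (y ∘ ss) := by
    intro k
    rw [← Finset.sum_fiberwise_of_maps_to (g := fun p => p.1 ∘ p.2) (t := surjs n i)
      (fun p hp => by
        rw [Finset.mem_product] at hp
        exact mem_surjs.mpr ((mem_surjs.mp hp.1).comp (mem_surjs.mp hp.2)))]
    apply Finset.sum_congr rfl
    intro ss _
    rw [Finset.sum_mul]
    apply Finset.sum_congr rfl
    intro p hp
    rw [Finset.mem_filter] at hp
    rw [hp.2]
  have hmain : (∑ k ∈ Finset.Icc 1 n, (-1 : ℝ) ^ (n - k) * Lop k i (Lop n k f) y)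
      = ∑ ss ∈ surjs n i, Vsum n i ss * f (y ∘ ss) / (i.factorial : ℝ) := by
    calc (∑ k ∈ Finset.Icc 1 n, (-1 : ℝ) ^ (n - k) * Lop k i (Lop n k f) y)
        = ∑ k ∈ Finset.Icc 1 n, ∑ ss ∈ surjs n i,
            (-1:ℝ)^(n-k) * (Usum n i k ss / (k.factorial : ℝ)) * f (y ∘ ss)
              / (i.factorial : ℝ) := by
          apply Finset.sum_congr rfl
          intro k _
          rw [hterm k, hgroup k, Finset.sum_div, Finset.mul_sum]
          apply Finset.sum_congr rfl
          intro ss _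
          rw [Usum]
          field_simp
      _ = ∑ ss ∈ surjs n i, (∑ k ∈ Finset.Icc 1 n,
            (-1:ℝ)^(n-k) * (Usum n i k ss / (k.factorial : ℝ))) * f (y ∘ ss)
              / (i.factorial : ℝ) := by
          rw [Finset.sum_comm]
          apply Finset.sum_congr rfl
          intro ss _
          rw [Finset.sum_mul, Finset.sum_div]
      _ = ∑ ss ∈ surjs n i, Vsum n i ss * f (y ∘ ss) / (i.factorial : ℝ) := by
          apply Finset.sum_congr rfl
          intro ss _
          congr 2
          rw [Vsum]
          exact sum_Icc_one_eq n (fun k => (-1:ℝ)^(n-k) * (Usum n i k ss / (k.factorial : ℝ)))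
  rw [hmain]
  have hval : ∀ ss ∈ surjs n i, Vsum n i ss = if Function.Injective ss then 1 else 0 :=
    fun ss hss => Vsum_eq n i hn ss (mem_surjs.mp hss)
  by_cases hni : n = i
  · subst hni
    rw [dif_pos rfl]
    have hcast : castFun rfl f y = f y := rfl
    have hall : ∀ ss ∈ surjs n n, Vsum n n ss * f (y ∘ ss) / (n.factorial : ℝ)
        = f y / (n.factorial : ℝ) := by
      intro ss hss
      have hsurj := mem_surjs.mp hss
      have hinj : Function.Injective ss := (Finite.injective_iff_surjective).mpr hsurj
      rw [hval ss hss, if_pos hinj, one_mul]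
      congr 1
      have heq : y ∘ ss = y ∘ ⇑(Equiv.ofBijective ss ⟨hinj, hsurj⟩) := rfl
      rw [heq, hf (Equiv.ofBijective ss ⟨hinj, hsurj⟩) y]
    rw [Finset.sum_congr rfl hall, Finset.sum_const, card_surjs_self, nsmul_eq_mul, hcast]
    have hne : ((n.factorial : ℝ)) ≠ 0 := Nat.cast_ne_zero.mpr (Nat.factorial_ne_zero _)
    field_simp
  · rw [dif_neg hni]
    apply Finset.sum_eq_zero
    intro ss hss
    have hsurj := mem_surjs.mp hss
    have hninj : ¬ Function.Injective ss := by
      intro hinj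
      apply hni
      have := Fintype.card_of_bijective ⟨hinj, hsurj⟩
      simpa using this
    rw [hval ss hss, if_neg hninj, zero_mul, zero_div]
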